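/- For the Hilbert transform 𝕳 on the unit circle and a unit-speed unit circle parametrization z(α) = e^{iα}, the positive quantity Im [z̄, 𝕳̃] z_α equals (1/(8π)) ∫_0^{2π} |z(β) − z(α)|² csc²((β−α)/2) dβ; more generally, for any 2π-periodic C¹ curve Z, Im([Z̄, 𝕳̃] Z_α)(α) = (1/(8π)) ∫_0^{2π} |Z(β) − Z(α)|² csc²((β−α)/2) dβ > 0 (when Z is non-constant). -/

import Mathlib

open MeasureTheory Filter Function

private lemma periodic_norm_bound {E : Type*} [NormedAddCommGroup E] {f : ℝ → E} {T a C : ℝ}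
    (hT : 0 < T) (hf : Function.Periodic f T)
    (h : ∀ x ∈ Set.Ico a (a + T), ‖f x‖ ≤ C) : ∀ x, ‖f x‖ ≤ C := by
  intro x
  have h1 := toIcoMod_mem_Ico hT a x
  have h2 : f (toIcoMod hT a x) = f x := by
    rw [← self_sub_toIcoDiv_zsmul hT a x]
    exact hf.sub_zsmul_eq _
  rw [← h2]
  exact h _ h1

private lemma abs_le_pi_mul_abs_sin_half {x : ℝ} (hx : |x| ≤ Real.pi) :
    |x| ≤ Real.pi * |Real.sin (x / 2)| := by
  have hπ := Real.pi_pos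
  have h2 : |x / 2| ≤ Real.pi / 2 := by
    rw [abs_div]
    simp only [abs_two]
    linarith
  have h := Real.mul_abs_le_abs_sin h2
  rw [abs_div, abs_two] at h
  have h3 : (2 : ℝ) / Real.pi * (|x| / 2) = |x| / Real.pi := by field_simp
  rw [h3] at h
  calc |x| = Real.pi * (|x| / Real.pi) := by field_simp
    _ ≤ Real.pi * |Real.sin (x / 2)| := mul_le_mul_of_nonneg_left h hπ.le

set_option maxHeartbeats 3200000 in
/-- For any 2π-periodic C¹ curve `Z`, the imaginary part of the commutator
`[Z̄, 𝕳̃] Z_α` (whose combined kernel is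
`(1/(2πi))(Z̄(α) − Z̄(β)) Z_β(β) cot((β−α)/2)`, a bounded integrand) equals
`(1/(8π)) ∫₀^{2π} |Z(β) − Z(α)|² csc²((β−α)/2) dβ`, which is positive when `Z`
is non-constant. -/
theorem commutator_positivity
    (Z : ℝ → ℂ) (hZ : ContDiff ℝ 1 Z) (hper : Function.Periodic Z (2*Real.pi)) :
    ∀ α : ℝ,
      (((2*(Real.pi : ℂ)) * Complex.I)⁻¹ *
          ∫ β in (0:ℝ)..(2*Real.pi),
            ((starRingEnd ℂ) (Z α) - (starRingEnd ℂ) (Z β)) * deriv Z β *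
              ((Real.cos ((β - α)/2) / Real.sin ((β - α)/2) : ℝ) : ℂ)).im
        = (1/(8*Real.pi)) * ∫ β in (0:ℝ)..(2*Real.pi),
            (‖Z β - Z α‖)^2 * ((Real.sin ((β - α)/2))⁻¹)^2
      ∧ ((∃ a b : ℝ, Z a ≠ Z b) →
          0 < (1/(8*Real.pi)) * ∫ β in (0:ℝ)..(2*Real.pi),
            (‖Z β - Z α‖)^2 * ((Real.sin ((β - α)/2))⁻¹)^2) := by
  have hπ := Real.pi_pos
  have h2π : (0:ℝ) < 2*Real.pi := by linarith
  intro α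
  -- basic differentiability facts
  have hZdiff : Differentiable ℝ Z := hZ.differentiable one_ne_zero
  have hZd : ∀ β, HasDerivAt Z (deriv Z β) β := fun β => (hZdiff β).hasDerivAt
  have hZ'cont : Continuous (deriv Z) := hZ.continuous_deriv le_rfl
  have hZ'per : Function.Periodic (deriv Z) (2*Real.pi) := by
    intro x
    have h1 : deriv (fun y => Z (y + 2*Real.pi)) x = deriv Z (x + 2*Real.pi) := by
      simpa using deriv_comp_add_const Z (2*Real.pi) x
    have h2 : (fun y => Z (y + 2*Real.pi)) = Z := funext fun y => hper y
    rw [← h1, h2]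
  -- abbreviations
  set K : ℝ → ℝ := fun β => Real.cos ((β - α)/2) / Real.sin ((β - α)/2) with hKdef
  set S : ℝ → ℝ := fun β => ((Real.sin ((β - α)/2))⁻¹)^2 with hSdef
  set G : ℝ → ℝ := fun β => Complex.normSq (Z β - Z α) with hGdef
  set G₁ : ℝ → ℝ := fun β => 2 * ((starRingEnd ℂ) (Z β - Z α) * deriv Z β).re with hG₁def
  set A : ℝ → ℝ := fun β => G₁ β * K β with hAdef
  set B : ℝ → ℝ := fun β => G β * S β with hBdef
  set F : ℝ → ℂ := fun β =>
    ((starRingEnd ℂ) (Z α) - (starRingEnd ℂ) (Z β)) * deriv Z β * ((K β : ℝ) : ℂ) with hFdef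
  -- periodicity of all players
  have hGper : Function.Periodic G (2*Real.pi) := fun x => by simp [hGdef, hper x]
  have hKper : Function.Periodic K (2*Real.pi) := by
    intro x
    have h1 : (x + 2*Real.pi - α)/2 = (x - α)/2 + Real.pi := by ring
    simp only [hKdef, h1, Real.cos_add_pi, Real.sin_add_pi, neg_div_neg_eq]
  have hSper : Function.Periodic S (2*Real.pi) := by
    intro x
    have h1 : (x + 2*Real.pi - α)/2 = (x - α)/2 + Real.pi := by ring
    simp [hSdef, h1, Real.sin_add_pi]
  have hG₁per : Function.Periodic G₁ (2*Real.pi) := fun x => by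
    simp [hG₁def, hper x, hZ'per x]
  have hAper : Function.Periodic A (2*Real.pi) := fun x => by
    simp only [hAdef, hGper x, hKper x, hG₁per x]
  have hBper : Function.Periodic B (2*Real.pi) := fun x => by
    simp only [hBdef, hGper x, hSper x, hSper x]
  have hFper : Function.Periodic F (2*Real.pi) := fun x => by
    simp only [hFdef, hper x, hZ'per x, hKper x]
  -- bound on the derivative on the window
  obtain ⟨M, hM⟩ : ∃ M, ∀ β ∈ Set.Icc (α - Real.pi) (α + Real.pi), ‖deriv Z β‖ ≤ M :=
    isCompact_Icc.exists_bound_of_continuousOn hZ'cont.continuousOn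
  have hαmem : α ∈ Set.Icc (α - Real.pi) (α + Real.pi) := by
    constructor <;> linarith
  have hM0 : 0 ≤ M := le_trans (norm_nonneg _) (hM α hαmem)
  have hLip : ∀ β ∈ Set.Icc (α - Real.pi) (α + Real.pi), ‖Z β - Z α‖ ≤ M * |β - α| := by
    intro β hβ
    have := (convex_Icc (α - Real.pi) (α + Real.pi)).norm_image_sub_le_of_norm_hasDerivWithin_le
      (f := Z) (f' := deriv Z) (fun x hx => (hZd x).hasDerivWithinAt) hM hαmem hβ
    simpa [Real.norm_eq_abs] using this
  -- window bounds
  have hxle : ∀ β ∈ Set.Icc (α - Real.pi) (α + Real.pi), |β - α| ≤ Real.pi := by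
    intro β hβ
    rw [abs_le]
    constructor <;> [linarith [hβ.1]; linarith [hβ.2]]
  have hGb : ∀ β ∈ Set.Icc (α - Real.pi) (α + Real.pi), G β ≤ (M * |β - α|)^2 := by
    intro β hβ
    have h1 : G β = ‖Z β - Z α‖^2 := by
      simp [hGdef, Complex.normSq_eq_norm_sq]
    rw [h1]
    exact pow_le_pow_left₀ (norm_nonneg _) (hLip β hβ) 2
  have hG₁b : ∀ β ∈ Set.Icc (α - Real.pi) (α + Real.pi), |G₁ β| ≤ 2 * (M * |β - α|) * M := by
    intro β hβ
    have h1 : |G₁ β| ≤ 2 * ‖(starRingEnd ℂ) (Z β - Z α) * deriv Z β‖ := by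
      rw [hG₁def]
      simp only [abs_mul, abs_two]
      gcongr
      exact Complex.abs_re_le_norm _
    have h2 : ‖(starRingEnd ℂ) (Z β - Z α) * deriv Z β‖ ≤ (M * |β - α|) * M := by
      rw [norm_mul, RCLike.norm_conj]
      exact mul_le_mul (hLip β hβ) (hM β hβ) (norm_nonneg _) (by positivity)
    calc |G₁ β| ≤ 2 * ‖(starRingEnd ℂ) (Z β - Z α) * deriv Z β‖ := h1
      _ ≤ 2 * ((M * |β - α|) * M) := by linarith
      _ = 2 * (M * |β - α|) * M := by ring
  -- pointwise bounds for A, B, F on the window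
  have hKb : ∀ β, Real.sin ((β - α)/2) ≠ 0 → |K β| ≤ |Real.sin ((β - α)/2)|⁻¹ := by
    intro β hs
    have h1 : |K β| = |Real.cos ((β - α)/2)| / |Real.sin ((β - α)/2)| := by
      rw [hKdef]; exact abs_div _ _
    rw [h1, inv_eq_one_div]
    gcongr
    · exact Real.abs_cos_le_one _
  have hratio : ∀ β ∈ Set.Icc (α - Real.pi) (α + Real.pi), Real.sin ((β - α)/2) ≠ 0 →
      |β - α| * |Real.sin ((β - α)/2)|⁻¹ ≤ Real.pi := by
    intro β hβ hs
    have hsp : 0 < |Real.sin ((β - α)/2)| := abs_pos.mpr hs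
    have hJ := abs_le_pi_mul_abs_sin_half (hxle β hβ)
    rw [← div_eq_mul_inv, div_le_iff₀ hsp]
    linarith
  have hAb : ∀ β ∈ Set.Icc (α - Real.pi) (α + Real.pi), |A β| ≤ 2 * Real.pi * M^2 := by
    intro β hβ
    by_cases hs : Real.sin ((β - α)/2) = 0
    · have : A β = 0 := by simp [hAdef, hKdef, hs]
      rw [this, abs_zero]; positivity
    · calc |A β| = |G₁ β| * |K β| := by rw [hAdef]; exact abs_mul _ _
        _ ≤ (2 * (M * |β - α|) * M) * |Real.sin ((β - α)/2)|⁻¹ :=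
            mul_le_mul (hG₁b β hβ) (hKb β hs) (abs_nonneg _) (by positivity)
        _ = 2 * M^2 * (|β - α| * |Real.sin ((β - α)/2)|⁻¹) := by ring
        _ ≤ 2 * M^2 * Real.pi := by
            exact mul_le_mul_of_nonneg_left (hratio β hβ hs) (by positivity)
        _ = 2 * Real.pi * M^2 := by ring
  have hBb : ∀ β ∈ Set.Icc (α - Real.pi) (α + Real.pi), |B β| ≤ Real.pi^2 * M^2 := by
    intro β hβ
    by_cases hs : Real.sin ((β - α)/2) = 0
    · have : B β = 0 := by simp [hBdef, hSdef, hs]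
      rw [this, abs_zero]; positivity
    · have h1 : |B β| = G β * (|Real.sin ((β - α)/2)|⁻¹)^2 := by
        rw [hBdef, abs_mul, abs_of_nonneg (Complex.normSq_nonneg _), hSdef]
        rw [abs_pow, abs_inv]
      calc |B β| = G β * (|Real.sin ((β - α)/2)|⁻¹)^2 := h1
        _ ≤ (M * |β - α|)^2 * (|Real.sin ((β - α)/2)|⁻¹)^2 := by
            exact mul_le_mul_of_nonneg_right (hGb β hβ) (by positivity)
        _ = (M * (|β - α| * |Real.sin ((β - α)/2)|⁻¹))^2 := by ring
        _ ≤ (M * Real.pi)^2 := by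
            exact pow_le_pow_left₀ (by positivity)
              (mul_le_mul_of_nonneg_left (hratio β hβ hs) hM0) 2
        _ = Real.pi^2 * M^2 := by ring
  have hFb : ∀ β ∈ Set.Icc (α - Real.pi) (α + Real.pi), ‖F β‖ ≤ Real.pi * M^2 := by
    intro β hβ
    by_cases hs : Real.sin ((β - α)/2) = 0
    · have hk0 : K β = 0 := by rw [hKdef]; simp [hs]
      have : F β = 0 := by rw [hFdef]; simp [hk0]
      rw [this, norm_zero]; positivity
    · have h1 : ‖(starRingEnd ℂ) (Z α) - (starRingEnd ℂ) (Z β)‖ = ‖Z β - Z α‖ := by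
        rw [← map_sub, RCLike.norm_conj, norm_sub_rev]
      calc ‖F β‖ = ‖(starRingEnd ℂ) (Z α) - (starRingEnd ℂ) (Z β)‖ * ‖deriv Z β‖ * |K β| := by
            rw [hFdef]; simp [norm_mul, Complex.norm_real]
        _ ≤ (M * |β - α|) * M * |Real.sin ((β - α)/2)|⁻¹ := by
            rw [h1]
            exact mul_le_mul (mul_le_mul (hLip β hβ) (hM β hβ) (norm_nonneg _) (by positivity))
              (hKb β hs) (abs_nonneg _) (by positivity)
        _ = M^2 * (|β - α| * |Real.sin ((β - α)/2)|⁻¹) := by ring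
        _ ≤ M^2 * Real.pi := mul_le_mul_of_nonneg_left (hratio β hβ hs) (by positivity)
        _ = Real.pi * M^2 := by ring
  -- upgrade to global bounds using periodicity
  have hwindow : ∀ x ∈ Set.Ico (α - Real.pi) (α - Real.pi + 2*Real.pi),
      x ∈ Set.Icc (α - Real.pi) (α + Real.pi) := by
    intro x hx
    exact ⟨hx.1, by linarith [hx.2]⟩
  have hAg : ∀ β, |A β| ≤ 2 * Real.pi * M^2 := by
    intro β
    have h := periodic_norm_bound h2π hAper (a := α - Real.pi) (C := 2 * Real.pi * M^2)
      (fun x hx => by rw [Real.norm_eq_abs]; exact hAb x (hwindow x hx)) β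
    rwa [Real.norm_eq_abs] at h
  have hBg : ∀ β, |B β| ≤ Real.pi^2 * M^2 := by
    intro β
    have h := periodic_norm_bound h2π hBper (a := α - Real.pi) (C := Real.pi^2 * M^2)
      (fun x hx => by rw [Real.norm_eq_abs]; exact hBb x (hwindow x hx)) β
    rwa [Real.norm_eq_abs] at h
  have hFg : ∀ β, ‖F β‖ ≤ Real.pi * M^2 :=
    periodic_norm_bound h2π hFper (a := α - Real.pi) (C := Real.pi * M^2)
      (fun x hx => hFb x (hwindow x hx))
  -- measurability
  have hinner : Continuous fun β : ℝ => (β - α)/2 :=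
    (continuous_id.sub continuous_const).div_const 2
  have hKm : Measurable K :=
    ((Real.continuous_cos.comp hinner).measurable).div ((Real.continuous_sin.comp hinner).measurable)
  have hSm : Measurable S :=
    (((Real.continuous_sin.comp hinner).measurable).inv).pow_const 2
  have hGcont : Continuous G :=
    Complex.continuous_normSq.comp (hZ.continuous.sub continuous_const)
  have hG₁cont : Continuous G₁ :=
    continuous_const.mul ((Complex.continuous_re.comp
      (((Complex.continuous_conj.comp (hZ.continuous.sub continuous_const))).mul hZ'cont)))
  have hAmeas : Measurable A := hG₁cont.measurable.mul hKm
  have hBmeas : Measurable B := hGcont.measurable.mul hSm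
  have hFmeas : Measurable F := by
    apply Measurable.mul
    · exact ((continuous_const.sub (Complex.continuous_conj.comp hZ.continuous)).measurable).mul
        hZ'cont.measurable
    · exact Complex.measurable_ofReal.comp hKm
  -- integrability
  have hIoc : ∀ a b : ℝ, volume (Set.uIoc a b) ≠ ⊤ := fun a b => measure_Ioc_lt_top.ne
  have hAint : ∀ a b : ℝ, IntervalIntegrable A volume a b := by
    intro a b
    rw [intervalIntegrable_iff]
    exact Measure.integrableOn_of_bounded (hIoc a b) hAmeas.aestronglyMeasurable
      (ae_of_all _ fun x => by rw [Real.norm_eq_abs]; exact hAg x)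
  have hBint : ∀ a b : ℝ, IntervalIntegrable B volume a b := by
    intro a b
    rw [intervalIntegrable_iff]
    exact Measure.integrableOn_of_bounded (hIoc a b) hBmeas.aestronglyMeasurable
      (ae_of_all _ fun x => by rw [Real.norm_eq_abs]; exact hBg x)
  have hFint : ∀ a b : ℝ, IntervalIntegrable F volume a b := by
    intro a b
    rw [intervalIntegrable_iff]
    exact Measure.integrableOn_of_bounded (hIoc a b) hFmeas.aestronglyMeasurable
      (ae_of_all _ fun x => hFg x)
  -- derivative of G
  have hGd : ∀ β, HasDerivAt G (G₁ β) β := by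
    intro β
    have hw : HasDerivAt (fun b => Z b - Z α) (deriv Z β) β := (hZd β).sub_const _
    have hre : HasDerivAt (fun b => (Z b - Z α).re) ((deriv Z β).re) β :=
      Complex.reCLM.hasFDerivAt.comp_hasDerivAt β hw
    have him₂ : HasDerivAt (fun b => (Z b - Z α).im) ((deriv Z β).im) β :=
      Complex.imCLM.hasFDerivAt.comp_hasDerivAt β hw
    have hGeq : G = fun b => (Z b - Z α).re * (Z b - Z α).re + (Z b - Z α).im * (Z b - Z α).im :=
      funext fun b => by rw [hGdef]; simp [Complex.normSq_apply]
    have h1 := (hre.mul hre).add (him₂.mul him₂)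
    rw [hGeq]
    refine h1.congr_deriv ?_
    rw [hG₁def]
    simp [Complex.mul_re]
    ring
  -- derivative of K
  have hKSd : ∀ β, Real.sin ((β - α)/2) ≠ 0 → HasDerivAt K (-(1/2) * S β) β := by
    intro β hs
    have hi : HasDerivAt (fun b : ℝ => (b - α)/2) (1/2) β := by
      simpa using ((hasDerivAt_id β).sub_const α).div_const 2
    have hc : HasDerivAt (fun b => Real.cos ((b - α)/2)) (-Real.sin ((β - α)/2) * (1/2)) β :=
      (Real.hasDerivAt_cos _).comp β hi
    have hsn : HasDerivAt (fun b => Real.sin ((b - α)/2)) (Real.cos ((β - α)/2) * (1/2)) β :=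
      (Real.hasDerivAt_sin _).comp β hi
    have h := hc.div hsn hs
    have hK : K = fun b => Real.cos ((b - α)/2) / Real.sin ((b - α)/2) := hKdef
    rw [hK]
    refine h.congr_deriv ?_
    rw [hSdef]
    have hpyth := Real.sin_sq_add_cos_sq ((β - α)/2)
    field_simp
    nlinarith [hpyth]
  -- nonvanishing of sin away from α
  have hsinne : ∀ β ∈ Set.Icc (α - Real.pi) (α + Real.pi), β ≠ α →
      Real.sin ((β - α)/2) ≠ 0 := by
    intro β hβ hne hs0
    have hJ := abs_le_pi_mul_abs_sin_half (hxle β hβ)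
    rw [hs0] at hJ
    simp only [abs_zero, mul_zero] at hJ
    have h0 : β - α = 0 := abs_nonpos_iff.mp hJ
    exact hne (by linarith)
  -- the potential u and its derivative v
  set u : ℝ → ℝ := fun β => G β * K β with hudef
  set v : ℝ → ℝ := fun β => A β - (1/2) * B β with hvdef
  have hud : ∀ β ∈ Set.Icc (α - Real.pi) (α + Real.pi), β ≠ α → HasDerivAt u (v β) β := by
    intro β hβ hne
    have hs := hsinne β hβ hne
    have h := (hGd β).mul (hKSd β hs)
    rw [hudef]
    refine h.congr_deriv ?_
    rw [hvdef, hAdef, hBdef]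
    ring
  -- continuity of u on the window
  have hucont : ContinuousOn u (Set.Icc (α - Real.pi) (α + Real.pi)) := by
    intro β hβ
    by_cases hne : β = α
    · subst hne
      have hbnd : ∀ᶠ x in nhds β, ‖u x‖ ≤ Real.pi * M^2 * |x - β| := by
        have hev : Set.Icc (β - Real.pi) (β + Real.pi) ∈ nhds β :=
          Icc_mem_nhds (by linarith) (by linarith)
        filter_upwards [hev] with x hx
        by_cases hs : Real.sin ((x - β)/2) = 0
        · have hx0 : u x = 0 := by rw [hudef]; simp [hKdef, hs]
          rw [hx0, norm_zero]; positivity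
        · have hGnn : 0 ≤ G x := by rw [hGdef]; exact Complex.normSq_nonneg _
          have e1 : ‖u x‖ = G x * |K x| := by
            simp only [hudef, Real.norm_eq_abs, abs_mul]
            rw [abs_of_nonneg hGnn]
          have e2 : G x * |K x| ≤ (M * |x - β|)^2 * |Real.sin ((x - β)/2)|⁻¹ :=
            mul_le_mul (hGb x hx) (hKb x hs) (abs_nonneg _) (by positivity)
          have e3 : (M * |x - β|)^2 * |Real.sin ((x - β)/2)|⁻¹
              = M^2 * |x - β| * (|x - β| * |Real.sin ((x - β)/2)|⁻¹) := by ring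
          have e4 : M^2 * |x - β| * (|x - β| * |Real.sin ((x - β)/2)|⁻¹)
              ≤ M^2 * |x - β| * Real.pi :=
            mul_le_mul_of_nonneg_left (hratio x hx hs) (by positivity)
          rw [e1]
          calc G x * |K x| ≤ (M * |x - β|)^2 * |Real.sin ((x - β)/2)|⁻¹ := e2
            _ = M^2 * |x - β| * (|x - β| * |Real.sin ((x - β)/2)|⁻¹) := e3
            _ ≤ M^2 * |x - β| * Real.pi := e4
            _ = Real.pi * M^2 * |x - β| := by ring
      have hzero : Tendsto (fun x => Real.pi * M^2 * |x - β|) (nhds β) (nhds 0) := by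
        have hcont : Continuous fun x : ℝ => Real.pi * M^2 * |x - β| :=
          continuous_const.mul ((continuous_id.sub continuous_const).abs)
        have := hcont.tendsto β
        simpa using this
      have hb : Tendsto u (nhds β) (nhds 0) := squeeze_zero_norm' hbnd hzero
      have hu0 : u β = 0 := by
        simp only [hudef, hGdef, sub_self, map_zero, zero_mul]
      have hca : ContinuousAt u β := by rw [ContinuousAt, hu0]; exact hb
      exact hca.continuousWithinAt
    · have hs := hsinne β hβ hne
      have hKc : ContinuousAt K β := by
        rw [hKdef]
        exact ContinuousAt.div ((Real.continuous_cos.comp hinner).continuousAt)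
          ((Real.continuous_sin.comp hinner).continuousAt) hs
      exact ((hGcont.continuousAt).mul hKc).continuousWithinAt
  -- values of u at the endpoints and center
  have hu0 : u α = 0 := by
    simp only [hudef, hGdef, sub_self, map_zero, zero_mul]
  have huR : u (α + Real.pi) = 0 := by
    have h1 : (α + Real.pi - α)/2 = Real.pi/2 := by ring
    have hK0 : K (α + Real.pi) = 0 := by
      simp only [hKdef]
      rw [h1, Real.cos_pi_div_two, zero_div]
    simp only [hudef, hK0, mul_zero]
  have huL : u (α - Real.pi) = 0 := by
    have h1 : (α - Real.pi - α)/2 = -(Real.pi/2) := by ring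
    have hK0 : K (α - Real.pi) = 0 := by
      simp only [hKdef]
      rw [h1, Real.cos_neg, Real.cos_pi_div_two, zero_div]
    simp only [hudef, hK0, mul_zero]
  -- integrability of v
  have hvint : ∀ a b : ℝ, IntervalIntegrable v volume a b := by
    intro a b
    rw [hvdef]
    exact (hAint a b).sub ((hBint a b).const_mul _)
  -- fundamental theorem of calculus on each half
  have hI1 : ∫ β in (α - Real.pi)..α, v β = u α - u (α - Real.pi) := by
    apply intervalIntegral.integral_eq_sub_of_hasDeriv_right_of_le (by linarith)
      (hucont.mono (Set.Icc_subset_Icc le_rfl (by linarith)))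
      (fun x hx => ((hud x ⟨hx.1.le, by linarith [hx.2]⟩ (ne_of_lt hx.2)).hasDerivWithinAt))
      (hvint _ _)
  have hI2 : ∫ β in α..(α + Real.pi), v β = u (α + Real.pi) - u α := by
    apply intervalIntegral.integral_eq_sub_of_hasDeriv_right_of_le (by linarith)
      (hucont.mono (Set.Icc_subset_Icc (by linarith) le_rfl))
      (fun x hx => ((hud x ⟨by linarith [hx.1], hx.2.le⟩ (ne_of_gt hx.1)).hasDerivWithinAt))
      (hvint _ _)
  have hvzero : ∫ β in (α - Real.pi)..(α + Real.pi), v β = 0 := by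
    rw [← intervalIntegral.integral_add_adjacent_intervals (hvint (α - Real.pi) α)
      (hvint α (α + Real.pi)), hI1, hI2, hu0, huL, huR]
    ring
  have hhalf : ∫ β in (α - Real.pi)..(α + Real.pi), A β
      = (1/2) * ∫ β in (α - Real.pi)..(α + Real.pi), B β := by
    have h := hvzero
    rw [hvdef] at h
    rw [intervalIntegral.integral_sub (hAint _ _) ((hBint _ _).const_mul _),
      intervalIntegral.integral_const_mul] at h
    linarith
  -- shift the integrals to the window using periodicity
  have hshiftA : ∫ β in (0:ℝ)..(2*Real.pi), A β = ∫ β in (α - Real.pi)..(α + Real.pi), A β := by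
    have h := hAper.intervalIntegral_add_eq 0 (α - Real.pi)
    have e1 : (0:ℝ) + 2*Real.pi = 2*Real.pi := by ring
    have e2 : α - Real.pi + 2*Real.pi = α + Real.pi := by ring
    rw [e1, e2] at h
    exact h
  have hshiftB : ∫ β in (0:ℝ)..(2*Real.pi), B β = ∫ β in (α - Real.pi)..(α + Real.pi), B β := by
    have h := hBper.intervalIntegral_add_eq 0 (α - Real.pi)
    have e1 : (0:ℝ) + 2*Real.pi = 2*Real.pi := by ring
    have e2 : α - Real.pi + 2*Real.pi = α + Real.pi := by ring
    rw [e1, e2] at h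
    exact h
  -- the real part of F
  have hFre : ∀ β, (F β).re = -(1/2) * A β := by
    intro β
    simp only [hFdef, hAdef, hG₁def, hKdef]
    simp only [Complex.mul_re, Complex.mul_im, Complex.sub_re, Complex.sub_im,
      Complex.conj_re, Complex.conj_im, Complex.ofReal_re, Complex.ofReal_im,
      mul_zero, zero_mul, sub_zero]
    ring
  have hJre : (∫ β in (0:ℝ)..(2*Real.pi), F β).re
      = -(1/2) * ∫ β in (0:ℝ)..(2*Real.pi), A β := by
    have h := Complex.reCLM.intervalIntegral_comp_comm (hFint 0 (2*Real.pi))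
    have h2 : (∫ β in (0:ℝ)..(2*Real.pi), F β).re
        = ∫ β in (0:ℝ)..(2*Real.pi), (F β).re := by
      simpa [Complex.reCLM_apply] using h.symm
    rw [h2]
    simp only [hFre]
    exact intervalIntegral.integral_const_mul _ _
  have himW : ∀ W : ℂ, (((2*(Real.pi : ℂ)) * Complex.I)⁻¹ * W).im = -(2*Real.pi)⁻¹ * W.re := by
    intro W
    have h : ((2*(Real.pi : ℂ)) * Complex.I)⁻¹ = Complex.ofReal (-(2*Real.pi)⁻¹) * Complex.I := by
      rw [mul_inv, Complex.inv_I]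
      rw [show ((2:ℂ)*(Real.pi:ℂ)) = ((2*Real.pi : ℝ) : ℂ) by push_cast; ring]
      rw [← Complex.ofReal_inv]
      push_cast
      ring
    rw [h]
    simp [Complex.mul_im, Complex.mul_re]
  -- identify the right-hand side integrand with B
  have hRB : ∫ β in (0:ℝ)..(2*Real.pi),
      (‖Z β - Z α‖)^2 * ((Real.sin ((β - α)/2))⁻¹)^2
      = ∫ β in (0:ℝ)..(2*Real.pi), B β := by
    apply intervalIntegral.integral_congr
    intro x hx
    simp only [hBdef, hGdef, hSdef, Complex.sq_norm]
  constructor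
  · rw [himW, hJre, hshiftA, hhalf, ← hshiftB, hRB]
    generalize (∫ β in (0:ℝ)..(2*Real.pi), B β) = X
    have hπne : Real.pi ≠ 0 := Real.pi_ne_zero
    field_simp
    ring_nf
  · rintro ⟨a, b, hab⟩
    rw [hRB]
    have hBnn : ∀ x, 0 ≤ B x := by
      intro x
      simp only [hBdef, hGdef, hSdef]
      exact mul_nonneg (Complex.normSq_nonneg _) (by positivity)
    -- find a point in (0, 2π) where Z differs from Z α
    have hne : ∃ β₀ ∈ Set.Ioo (0:ℝ) (2*Real.pi), Z β₀ ≠ Z α := by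
      by_contra hcon
      push_neg at hcon
      have hall : ∀ x, Z x = Z α := by
        have hclosed : IsClosed {x : ℝ | Z x = Z α} :=
          isClosed_eq hZ.continuous continuous_const
        have h1 : Set.Ioo (0:ℝ) (2*Real.pi) ⊆ {x | Z x = Z α} := fun x hx => hcon x hx
        have h2 : closure (Set.Ioo (0:ℝ) (2*Real.pi)) ⊆ {x | Z x = Z α} :=
          hclosed.closure_subset_iff.mpr h1
        rw [closure_Ioo (by linarith : (0:ℝ) ≠ 2*Real.pi)] at h2
        intro x
        have hm := toIcoMod_mem_Ico h2π 0 x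
        have hzx : Z (toIcoMod h2π 0 x) = Z x := by
          rw [← self_sub_toIcoDiv_zsmul h2π 0 x]
          exact hper.sub_zsmul_eq _
        have hmm : toIcoMod h2π 0 x ∈ Set.Icc (0:ℝ) (2*Real.pi) :=
          ⟨hm.1, by linarith [hm.2]⟩
        rw [← hzx]
        exact h2 hmm
      exact hab (by rw [hall a, hall b])
    obtain ⟨β₀, hβ₀mem, hβ₀⟩ := hne
    have hsβ₀ : Real.sin ((β₀ - α)/2) ≠ 0 := by
      intro hs
      obtain ⟨n, hn⟩ := Real.sin_eq_zero_iff.mp hs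
      apply hβ₀
      have hx : β₀ - n • (2*Real.pi) = α := by
        rw [zsmul_eq_mul]
        push_cast
        linarith
      calc Z β₀ = Z (β₀ - n • (2*Real.pi)) := (hper.sub_zsmul_eq n).symm
        _ = Z α := by rw [hx]
    have hBpos : 0 < B β₀ := by
      simp only [hBdef, hGdef, hSdef]
      apply mul_pos
      · exact Complex.normSq_pos.mpr (sub_ne_zero.mpr hβ₀)
      · exact pow_two_pos_of_ne_zero (inv_ne_zero hsβ₀)
    have hBc : ContinuousAt B β₀ := by
      have hS : ContinuousAt S β₀ := by
        rw [hSdef]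
        exact (((Real.continuous_sin.comp hinner).continuousAt).inv₀ hsβ₀).pow 2
      exact hGcont.continuousAt.mul hS
    have hev : ∀ᶠ x in nhds β₀, B β₀ / 2 < B x :=
      hBc.eventually (eventually_gt_nhds (by linarith))
    obtain ⟨ε, hε, hball⟩ := Metric.eventually_nhds_iff.mp hev
    set c := max 0 (β₀ - ε/2) with hcdef
    set d := min (2*Real.pi) (β₀ + ε/2) with hddef
    have hc0 : (0:ℝ) ≤ c := le_max_left _ _
    have hd2π : d ≤ 2*Real.pi := min_le_left _ _
    have hcd : c < d := by
      have h1 : (0:ℝ) < d := lt_min h2π (by linarith [hβ₀mem.1])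
      have h2 : β₀ - ε/2 < d := lt_min (by linarith [hβ₀mem.2]) (by linarith)
      exact max_lt h1 h2
    have hmem : ∀ x ∈ Set.Icc c d, B β₀ / 2 < B x := by
      intro x hx
      apply hball
      rw [Real.dist_eq, abs_lt]
      have hcx : β₀ - ε/2 ≤ x := le_trans (le_max_right _ _) hx.1
      have hdx : x ≤ β₀ + ε/2 := le_trans hx.2 (min_le_right _ _)
      constructor <;> linarith
    have hmid : (d - c) * (B β₀ / 2) ≤ ∫ x in c..d, B x := by
      have h := intervalIntegral.integral_mono_on hcd.le intervalIntegrable_const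
        (hBint c d) (fun x hx => (hmem x hx).le)
      rwa [intervalIntegral.integral_const, smul_eq_mul] at h
    have hsplit : (∫ x in (0:ℝ)..c, B x) + ((∫ x in c..d, B x) + ∫ x in d..(2*Real.pi), B x)
        = ∫ x in (0:ℝ)..(2*Real.pi), B x := by
      rw [intervalIntegral.integral_add_adjacent_intervals (hBint c d) (hBint d (2*Real.pi)),
        intervalIntegral.integral_add_adjacent_intervals (hBint 0 c) (hBint c (2*Real.pi))]
    have h0c : 0 ≤ ∫ x in (0:ℝ)..c, B x :=
      intervalIntegral.integral_nonneg hc0 (fun x _ => hBnn x)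
    have hd2 : 0 ≤ ∫ x in d..(2*Real.pi), B x :=
      intervalIntegral.integral_nonneg hd2π (fun x _ => hBnn x)
    have hfinal : 0 < ∫ x in (0:ℝ)..(2*Real.pi), B x := by
      rw [← hsplit]
      have hmpos : 0 < (d - c) * (B β₀ / 2) :=
        mul_pos (by linarith) (by linarith)
      linarith
    have hcoef : 0 < 1/(8*Real.pi) := by positivity
    exact mul_pos hcoef hfinal
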